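/- Let G be a matching covered finite simple graph and let ∂(S) be a nontrivial tight cut of G. If G contains no odd conformal bicycle, then the graph obtained from G by contracting S to a single vertex also contains no odd conformal bicycle. -/

import Mathlib

open SimpleGraph

variable {V : Type*}

/-- A conformal bicycle: two vertex-disjoint cycles whose complement
(in the vertex set) induces a subgraph having a perfect matching. -/
def IsConformalBicycle (G : SimpleGraph V) {a b : V} (c₁ : G.Walk a a) (c₂ : G.Walk b b) : Prop :=
  c₁.IsCycle ∧ c₂.IsCycle ∧ (∀ x ∈ c₁.support, x ∉ c₂.support) ∧
    ∃ M : G.Subgraph, M.IsMatching ∧ M.verts = {v | v ∉ c₁.support ∧ v ∉ c₂.support}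

def HasConformalBicycle (G : SimpleGraph V) : Prop :=
  ∃ (a b : V) (c₁ : G.Walk a a) (c₂ : G.Walk b b), IsConformalBicycle G c₁ c₂

def HasOddConformalBicycle (G : SimpleGraph V) : Prop :=
  ∃ (a b : V) (c₁ : G.Walk a a) (c₂ : G.Walk b b),
    IsConformalBicycle G c₁ c₂ ∧ Odd c₁.length ∧ Odd c₂.length

def HasEvenConformalBicycle (G : SimpleGraph V) : Prop :=
  ∃ (a b : V) (c₁ : G.Walk a a) (c₂ : G.Walk b b),
    IsConformalBicycle G c₁ c₂ ∧ Even c₁.length ∧ Even c₂.length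

/-- A matching covered graph: connected, at least two vertices,
and every edge lies in some perfect matching. -/
def MatchingCovered (G : SimpleGraph V) [Fintype V] : Prop :=
  G.Connected ∧ 2 ≤ Fintype.card V ∧
    ∀ e ∈ G.edgeSet, ∃ M : G.Subgraph, M.IsPerfectMatching ∧ e ∈ M.edgeSet

/-- The cut ∂(S): edges of `G` with exactly one end in `S`. -/
def cutEdges (G : SimpleGraph V) (S : Set V) : Set (Sym2 V) :=
  {e | e ∈ G.edgeSet ∧ ∃ a b, e = s(a, b) ∧ a ∈ S ∧ b ∉ S}

/-- A tight cut: every perfect matching contains exactly one edge of ∂(S). -/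
def IsTightCut (G : SimpleGraph V) (S : Set V) : Prop :=
  ∀ M : G.Subgraph, M.IsPerfectMatching → ∃! e, e ∈ M.edgeSet ∧ e ∈ cutEdges G S

/-- A nontrivial cut: both shores have at least two vertices. -/
def IsNontrivialCut (S : Set V) : Prop := 2 ≤ S.ncard ∧ 2 ≤ Sᶜ.ncard

/-- The graph obtained from `G` by contracting the vertex set `S` to the
single new vertex `none`. -/
def contractSet (G : SimpleGraph V) (S : Set V) : SimpleGraph (Option {v : V // v ∉ S}) :=
  SimpleGraph.fromRel (fun a b =>
    (∃ u w : {v : V // v ∉ S}, a = some u ∧ b = some w ∧ G.Adj ↑u ↑w) ∨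
    (a = none ∧ ∃ w : {v : V // v ∉ S}, b = some w ∧ ∃ z ∈ S, G.Adj z ↑w))

namespace ContractAux

variable {G : SimpleGraph V} {S : Set V}


variable {G : SimpleGraph V} {S : Set V}

lemma contract_adj_some {u w : {v : V // v ∉ S}} :
    (contractSet G S).Adj (some u) (some w) ↔ G.Adj ↑u ↑w := by
  constructor
  · rintro ⟨hne, (⟨u', w', hu, hw, hadj⟩ | ⟨h, -⟩) | (⟨u', w', hu, hw, hadj⟩ | ⟨h, -⟩)⟩
    · cases hu; cases hw; exact hadj
    · exact absurd h (by simp)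
    · cases hu; cases hw; exact hadj.symm
    · exact absurd h (by simp)
  · intro h
    refine ⟨?_, Or.inl (Or.inl ⟨u, w, rfl, rfl, h⟩)⟩
    intro he
    exact h.ne (congrArg Subtype.val (Option.some_injective _ he))

lemma contract_adj_none {w : {v : V // v ∉ S}} :
    (contractSet G S).Adj none (some w) ↔ ∃ z ∈ S, G.Adj z ↑w := by
  constructor
  · rintro ⟨hne, (⟨u', w', hu, hw, hadj⟩ | ⟨-, w', hw, z, hz, hadj⟩) |
      (⟨u', w', hu, hw, hadj⟩ | ⟨h, -⟩)⟩
    · exact absurd hu (by simp)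
    · cases hw; exact ⟨z, hz, hadj⟩
    · exact absurd hw (by simp)
    · exact absurd h (by simp)
  · rintro ⟨z, hz, hadj⟩
    exact ⟨by simp, Or.inl (Or.inr ⟨rfl, w, rfl, z, hz, hadj⟩)⟩

/-- The graph on the complement of `S`. -/
abbrev side (G : SimpleGraph V) (S : Set V) : SimpleGraph {v : V // v ∉ S} :=
  G.comap Subtype.val

/-- Hom from the side graph into the contraction. -/
def ι : side G S →g contractSet G S where
  toFun := some
  map_rel' := fun h => contract_adj_some.mpr h

/-- Hom from the side graph into `G`. -/
def κ : side G S →g G where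
  toFun := Subtype.val
  map_rel' := fun h => h

lemma ι_injective : Function.Injective (ι (G := G) (S := S)) :=
  Option.some_injective _

@[simp] lemma ι_apply (u : {v : V // v ∉ S}) : (ι (G := G)) u = some u := rfl

@[simp] lemma κ_apply (u : {v : V // v ∉ S}) : (κ (G := G) (S := S)) u = ↑u := rfl

lemma κ_injective : Function.Injective (κ (G := G) (S := S)) :=
  Subtype.val_injective

lemma lift_walk : ∀ {x y : Option {v : V // v ∉ S}} (p : (contractSet G S).Walk x y),
    none ∉ p.support → ∃ (a b : {v : V // v ∉ S}) (q : (side G S).Walk a b)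
      (hx : x = some a) (hy : y = some b), p = (q.map ι).copy hx.symm hy.symm := by
  intro x y p
  induction p with
  | nil =>
    intro hx
    simp only [Walk.support_nil, List.mem_singleton] at hx
    obtain ⟨a, rfl⟩ := Option.ne_none_iff_exists'.mp (fun he => hx (he ▸ rfl))
    exact ⟨a, a, Walk.nil, rfl, rfl, rfl⟩
  | @cons x c y h p ih =>
    intro hn
    simp only [Walk.support_cons, List.mem_cons] at hn
    push_neg at hn
    obtain ⟨hx, hp⟩ := hn
    obtain ⟨a', b, q, hc, hy, hq⟩ := ih hp
    obtain ⟨a, rfl⟩ := Option.ne_none_iff_exists'.mp (fun he => hx (he ▸ rfl))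
    subst hc; subst hy; subst hq
    refine ⟨a, b, Walk.cons (contract_adj_some.mp h) q, rfl, rfl, ?_⟩
    rfl

lemma lift_closed_walk {a : {v : V // v ∉ S}} (p : (contractSet G S).Walk (some a) (some a))
    (hp : none ∉ p.support) : ∃ q : (side G S).Walk a a, p = q.map ι := by
  obtain ⟨a', b, q, hx, hy, hq⟩ := lift_walk p hp
  obtain rfl : a = a' := Option.some_injective _ hx
  obtain rfl : a = b := Option.some_injective _ hy
  exact ⟨q, hq⟩



/-! ### Generic matching helpers -/

/-- Restriction of a subgraph to a vertex set. -/
def restrictV {G : SimpleGraph V} (N : G.Subgraph) (U : Set V) : G.Subgraph where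
  verts := U
  Adj x y := N.Adj x y ∧ x ∈ U ∧ y ∈ U
  adj_sub h := N.adj_sub h.1
  edge_vert h := h.2.1
  symm := ⟨fun x y h => ⟨N.adj_symm h.1, h.2.2, h.2.1⟩⟩

lemma restrictV_isMatching {G : SimpleGraph V} {N : G.Subgraph} {U : Set V}
    (hN : N.IsMatching) (hUv : U ⊆ N.verts)
    (hcl : ∀ x ∈ U, ∀ y, N.Adj x y → y ∈ U) : (restrictV N U).IsMatching := by
  intro v hv
  obtain ⟨w, hw, hu⟩ := hN (hUv hv)
  exact ⟨w, ⟨hw, hv, hcl v hv w hw⟩, fun u hu' => hu u hu'.1⟩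

lemma isMatching_deleteVerts_pair {G : SimpleGraph V} {M : G.Subgraph}
    (hM : M.IsMatching) {y y' : V} (h : M.Adj y y') :
    (M.deleteVerts {y, y'}).IsMatching := by
  intro v hv
  obtain ⟨hv1, hv2⟩ := hv
  obtain ⟨w, hw, huniq⟩ := hM hv1
  have hwy : w ∉ ({y, y'} : Set V) := by
    rintro (rfl | rfl)
    · have := (hM (M.edge_vert h)).unique (M.adj_symm hw) h
      exact hv2 (by simp [this])
    · have := (hM (M.edge_vert (M.adj_symm h))).unique (M.adj_symm hw) (M.adj_symm h)
      exact hv2 (by simp [this])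
  refine ⟨w, ?_, ?_⟩
  · exact Subgraph.deleteVerts_adj.mpr ⟨hv1, hv2, M.edge_vert (M.adj_symm hw), hwy, hw⟩
  · intro u hu
    exact huniq u (Subgraph.deleteVerts_adj.mp hu).2.2.2.2

/-! ### Tight cut helpers -/

lemma cut_unique (ht : IsTightCut G S) {N : G.Subgraph} (hN : N.IsPerfectMatching)
    {z w : V} (hz : z ∈ S) (hw : w ∉ S) (he : N.Adj z w) :
    ∀ x y, N.Adj x y → x ∈ S → y ∉ S → x = z ∧ y = w := by
  obtain ⟨e₀, -, he₀⟩ := ht N hN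
  intro x y hxy hx hy
  have h1 : s(z, w) = e₀ := he₀ _ ⟨Subgraph.mem_edgeSet.mpr he,
    (N.adj_sub he), z, w, rfl, hz, hw⟩
  have h2 : s(x, y) = e₀ := he₀ _ ⟨Subgraph.mem_edgeSet.mpr hxy,
    (N.adj_sub hxy), x, y, rfl, hx, hy⟩
  rw [← h1] at h2
  rw [Sym2.eq_iff] at h2
  rcases h2 with ⟨rfl, rfl⟩ | ⟨rfl, rfl⟩
  · exact ⟨rfl, rfl⟩
  · exact absurd hx hw


lemma near_matching [Fintype V] (hmc : MatchingCovered G) (ht : IsTightCut G S)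
    {z w : V} (hz : z ∈ S) (hw : w ∉ S) (hadj : G.Adj z w) :
    ∃ A : G.Subgraph, A.IsMatching ∧ A.verts = S \ {z} := by
  obtain ⟨N, hN, heN⟩ := hmc.2.2 s(z, w) hadj
  have hNzw : N.Adj z w := Subgraph.mem_edgeSet.mp heN
  refine ⟨restrictV N (S \ {z}), ?_, rfl⟩
  refine restrictV_isMatching hN.1 (fun x _ => hN.2 x) ?_
  rintro x ⟨hxS, hxz⟩ y hxy
  constructor
  · by_contra hyS
    exact hxz ((cut_unique ht hN hz hw hNzw x y hxy hxS hyS).1)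
  · intro hyz
    rw [Set.mem_singleton_iff] at hyz
    subst hyz
    have := (hN.1 (hN.2 y)).unique (N.adj_symm hxy) hNzw
    exact hw (this ▸ hxS)

lemma full_matching [Fintype V] (hmc : MatchingCovered G) (ht : IsTightCut G S)
    {z w : V} (hz : z ∈ S) (hw : w ∉ S) (hadj : G.Adj z w) :
    ∃ A : G.Subgraph, A.IsMatching ∧ A.verts = S ∪ {w} := by
  obtain ⟨N, hN, heN⟩ := hmc.2.2 s(z, w) hadj
  have hNzw : N.Adj z w := Subgraph.mem_edgeSet.mp heN
  refine ⟨restrictV N (S ∪ {w}), ?_, rfl⟩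
  refine restrictV_isMatching hN.1 (fun x _ => hN.2 x) ?_
  rintro x hx y hxy
  rcases hx with hxS | hxw
  · by_cases hyS : y ∈ S
    · exact Or.inl hyS
    · exact Or.inr ((cut_unique ht hN hz hw hNzw x y hxy hxS hyS).2)
  · rw [Set.mem_singleton_iff] at hxw
    subst hxw
    have := (hN.1 (hN.2 x)).unique hxy (N.adj_symm hNzw)
    exact Or.inl (this ▸ hz)


/-! ### Lifting matchings from the contraction -/

/-- Lift a subgraph of the contraction (ignoring `none`) to a subgraph of `G`. -/
def liftSub (M' : (contractSet G S).Subgraph) : G.Subgraph where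
  verts := {v : V | ∃ h : v ∉ S, some ⟨v, h⟩ ∈ M'.verts}
  Adj x y := ∃ (hx : x ∉ S) (hy : y ∉ S), M'.Adj (some ⟨x, hx⟩) (some ⟨y, hy⟩)
  adj_sub := by
    rintro x y ⟨hx, hy, h⟩
    exact contract_adj_some.mp (M'.adj_sub h)
  edge_vert := by
    rintro x y ⟨hx, hy, h⟩
    exact ⟨hx, M'.edge_vert h⟩
  symm := by
    constructor
    rintro x y ⟨hx, hy, h⟩
    exact ⟨hy, hx, M'.adj_symm h⟩

lemma liftSub_verts (M' : (contractSet G S).Subgraph) :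
    (liftSub M').verts = {v : V | ∃ h : v ∉ S, some ⟨v, h⟩ ∈ M'.verts} := rfl

lemma liftSub_isMatching {M' : (contractSet G S).Subgraph} (hM' : M'.IsMatching)
    (hnone : none ∉ M'.verts) : (liftSub (G := G) M').IsMatching := by
  rintro v ⟨hv, hvm⟩
  obtain ⟨u, hu, huniq⟩ := hM' hvm
  have hune : u ≠ none := by
    rintro rfl
    exact hnone (M'.edge_vert (M'.adj_symm hu))
  obtain ⟨y, rfl⟩ := Option.ne_none_iff_exists'.mp hune
  refine ⟨↑y, ⟨hv, y.2, by simpa using hu⟩, ?_⟩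
  rintro x ⟨hx, hy2, hadj⟩
  have := huniq _ hadj
  have := congrArg (Option.map Subtype.val) this
  simpa using this

/-! ### Alternating paths from two near-matchings -/

lemma alt_path [Fintype V] : ∀ (n : ℕ) (S : Set V) (_ : S.ncard ≤ n)
    (z1 z2 : V) (_ : z1 ∈ S) (_ : z2 ∈ S) (_ : z1 ≠ z2) (A B : G.Subgraph)
    (_ : A.IsMatching) (_ : B.IsMatching)
    (_ : A.verts = S \ {z1}) (_ : B.verts = S \ {z2}),
    ∃ (p : G.Walk z1 z2), p.IsPath ∧ Even p.length ∧ (∀ x ∈ p.support, x ∈ S) ∧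
      ∃ Cm : G.Subgraph, Cm.IsMatching ∧ Cm.verts = S \ {x | x ∈ p.support} := by
  intro n
  induction n with
  | zero =>
    intro S hcard z1 _ hz1 _ _ _ _ _ _ _ _
    have : S.Nonempty := ⟨z1, hz1⟩
    have := (Set.ncard_pos S.toFinite).mpr this
    omega
  | succ n ih =>
    intro S hcard z1 z2 hz1 hz2 hne A B hA hB hAv hBv
    -- partner of z1 in B
    have hz1B : z1 ∈ B.verts := by rw [hBv]; exact ⟨hz1, hne⟩
    obtain ⟨y, hy, hyuniq⟩ := hB hz1B
    have hyB : y ∈ B.verts := B.edge_vert (B.adj_symm hy)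
    have hyS : y ∈ S := (hBv ▸ hyB).1
    have hyz2 : y ≠ z2 := by
      have := (hBv ▸ hyB).2; simpa using this
    have hyz1 : y ≠ z1 := (Subgraph.Adj.ne hy).symm
    -- partner of y in A
    have hyA : y ∈ A.verts := by rw [hAv]; exact ⟨hyS, hyz1⟩
    obtain ⟨y', hy', hy'uniq⟩ := hA hyA
    have hy'A : y' ∈ A.verts := A.edge_vert (A.adj_symm hy')
    have hy'S : y' ∈ S := (hAv ▸ hy'A).1
    have hy'z1 : y' ≠ z1 := by
      have := (hAv ▸ hy'A).2; simpa using this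
    have hy'y : y' ≠ y := (Subgraph.Adj.ne hy').symm
    by_cases hy'z2 : y' = z2
    · -- base case: path z1 - y - z2
      subst hy'z2
      refine ⟨Walk.cons (B.adj_sub hy) (Walk.cons (A.adj_sub hy') Walk.nil), ?_, ?_, ?_, ?_⟩
      · rw [Walk.isPath_def]
        simp only [Walk.support_cons, Walk.support_nil]
        refine List.nodup_cons.mpr ⟨?_, List.nodup_cons.mpr ⟨?_, List.nodup_singleton _⟩⟩
        · simp [hyz1.symm, hne]
        · simp [hyz2]
      · simp
      · intro x hx
        simp only [Walk.support_cons, Walk.support_nil, List.mem_cons,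
          List.mem_singleton] at hx
        rcases hx with rfl | rfl | rfl | h
        · exact hz1
        · exact hyS
        · exact hz2
        · exact absurd h List.not_mem_nil
      · refine ⟨A.deleteVerts {y, y'}, isMatching_deleteVerts_pair hA hy', ?_⟩
        rw [Subgraph.deleteVerts_verts, hAv]
        ext x
        simp only [Set.mem_diff, Set.mem_singleton_iff, Set.mem_insert_iff, Set.mem_setOf_eq,
          Walk.support_cons, Walk.support_nil, List.mem_cons, List.mem_singleton]
        constructor
        · rintro ⟨⟨hxS, hxz1⟩, hxyy'⟩
          push_neg at hxyy'
          refine ⟨hxS, ?_⟩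
          simp [hxz1, hxyy'.1, hxyy'.2]
        · rintro ⟨hxS, hxsup⟩
          push_neg at hxsup
          obtain ⟨h1, h2, h3, -⟩ := hxsup
          exact ⟨⟨hxS, h1⟩, by simp [h2, h3]⟩
    · -- inductive step
      have hz2S' : z2 ∈ S \ {z1, y} := ⟨hz2, by simp [hne.symm, hyz2.symm]⟩
      have hy'S' : y' ∈ S \ {z1, y} := ⟨hy'S, by simp [hy'z1, hy'y]⟩
      have hcard' : (S \ {z1, y}).ncard ≤ n := by
        have hlt : (S \ {z1, y}).ncard < S.ncard := by
          refine Set.ncard_lt_ncard ⟨Set.diff_subset, fun hsub => ?_⟩ S.toFinite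
          simpa using hsub hz1
        omega
      have hA'v : (A.deleteVerts {y, y'}).verts = (S \ {z1, y}) \ {y'} := by
        rw [Subgraph.deleteVerts_verts, hAv]
        ext x
        simp only [Set.mem_diff, Set.mem_singleton_iff, Set.mem_insert_iff]
        tauto
      have hB'v : (B.deleteVerts {z1, y}).verts = (S \ {z1, y}) \ {z2} := by
        rw [Subgraph.deleteVerts_verts, hBv]
        ext x
        simp only [Set.mem_diff, Set.mem_singleton_iff, Set.mem_insert_iff]
        tauto
      obtain ⟨q, hqpath, hqeven, hqS, Cm, hCm, hCmv⟩ := ih (S \ {z1, y}) hcard' y' z2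
        hy'S' hz2S' hy'z2 (A.deleteVerts {y, y'}) (B.deleteVerts {z1, y})
        (isMatching_deleteVerts_pair hA hy') (isMatching_deleteVerts_pair hB hy) hA'v hB'v
      have hyq : y ∉ q.support := fun hmem => by simpa using (hqS y hmem).2
      have hz1q : z1 ∉ q.support := fun hmem => by simpa using (hqS z1 hmem).2
      refine ⟨Walk.cons (B.adj_sub hy) (Walk.cons (A.adj_sub hy') q), ?_, ?_, ?_, Cm, hCm, ?_⟩
      · refine Walk.IsPath.cons (Walk.IsPath.cons hqpath hyq) ?_
        simp only [Walk.support_cons, List.mem_cons]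
        push_neg
        exact ⟨hyz1.symm, hz1q⟩
      · obtain ⟨k, hk⟩ := hqeven
        exact ⟨k + 1, by simp only [Walk.length_cons]; omega⟩
      · intro x hx
        simp only [Walk.support_cons, List.mem_cons] at hx
        rcases hx with rfl | rfl | hx
        · exact hz1
        · exact hyS
        · exact (hqS x hx).1
      · rw [hCmv]
        ext x
        simp only [Set.mem_diff, Set.mem_singleton_iff, Set.mem_insert_iff, Set.mem_setOf_eq,
          Walk.support_cons, List.mem_cons]
        tauto


/-! ### Lifting cycles -/

lemma lift_cycleG {x : Option {v : V // v ∉ S}} (p : (contractSet G S).Walk x x)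
    (hp : none ∉ p.support) (hc : p.IsCycle) :
    ∃ (a : {v : V // v ∉ S}) (_ : x = some a) (cG : G.Walk (↑a) (↑a)),
      cG.IsCycle ∧ cG.length = p.length ∧
      (∀ v : V, v ∈ cG.support ↔ ∃ h : v ∉ S, some ⟨v, h⟩ ∈ p.support) := by
  obtain ⟨a, b, q, hx, hy, hq⟩ := lift_walk p hp
  obtain rfl : a = b := Option.some_injective _ (hx.symm.trans hy)
  subst hx
  change _ = Walk.map ι q at hq
  subst hq
  have hqc : q.IsCycle := (Walk.map_isCycle_iff_of_injective ι_injective).mp hc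
  refine ⟨a, rfl, q.map κ, (Walk.map_isCycle_iff_of_injective κ_injective).mpr hqc, ?_, ?_⟩
  · exact (Walk.length_map ..).trans (Walk.length_map ..).symm
  · intro v
    have hs1 : ∀ v, v ∈ (q.map κ).support ↔ ∃ u ∈ q.support, κ u = v := fun v => by
      rw [Walk.support_map, List.mem_map]
    have hs2 : ∀ x, x ∈ (q.map ι).support ↔ ∃ u ∈ q.support, ι u = x := fun x => by
      rw [Walk.support_map, List.mem_map]
    refine (hs1 v).trans (Iff.trans ?_ (exists_congr fun h => (hs2 _).symm))
    constructor
    · rintro ⟨u, hu, rfl⟩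
      exact ⟨u.2, u, hu, congrArg some (Subtype.ext rfl)⟩
    · rintro ⟨h, u, hu, heq⟩
      have : u = ⟨v, h⟩ := Option.some_injective _ (by simpa using heq)
      exact ⟨u, hu, by rw [this]; rfl⟩

/-- Case A: neither cycle passes through the contracted vertex. -/
lemma caseA [Fintype V] (hmc : MatchingCovered G) (ht : IsTightCut G S)
    {a b : Option {v : V // v ∉ S}}
    {c₁ : (contractSet G S).Walk a a} {c₂ : (contractSet G S).Walk b b}
    (hc1 : c₁.IsCycle) (hc2 : c₂.IsCycle)
    (hdisj : ∀ x ∈ c₁.support, x ∉ c₂.support)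
    {M' : (contractSet G S).Subgraph} (hM' : M'.IsMatching)
    (hM'v : M'.verts = {v | v ∉ c₁.support ∧ v ∉ c₂.support})
    (hodd1 : Odd c₁.length) (hodd2 : Odd c₂.length)
    (h1 : none ∉ c₁.support) (h2 : none ∉ c₂.support) :
    HasOddConformalBicycle G := by
  obtain ⟨a1, rfl, cG1, hcG1, hlen1, hsup1⟩ := lift_cycleG c₁ h1 hc1
  obtain ⟨a2, rfl, cG2, hcG2, hlen2, hsup2⟩ := lift_cycleG c₂ h2 hc2
  -- the contracted vertex is matched by M'
  have hnv : none ∈ M'.verts := by rw [hM'v]; exact ⟨h1, h2⟩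
  obtain ⟨u, hu, huuniq⟩ := hM' hnv
  have hune : u ≠ none := (M'.adj_sub hu).ne'
  obtain ⟨w, rfl⟩ := Option.ne_none_iff_exists'.mp hune
  obtain ⟨z, hzS, hzw⟩ := contract_adj_none.mp (M'.adj_sub hu)
  -- matching on S ∪ {w}
  obtain ⟨MS, hMS, hMSv⟩ := full_matching hmc ht hzS w.2 hzw
  -- lift the rest of M'
  set M'' := M'.deleteVerts {none, some w} with hM''def
  have hM''m : M''.IsMatching := isMatching_deleteVerts_pair hM' hu
  have hM''n : none ∉ M''.verts := by simp [hM''def, Subgraph.deleteVerts_verts]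
  have hL : (liftSub M'').IsMatching := liftSub_isMatching hM''m hM''n
  -- supports of the lifted cycles avoid S
  have hsupS1 : ∀ v ∈ cG1.support, v ∉ S := fun v hv => ((hsup1 v).mp hv).choose
  have hsupS2 : ∀ v ∈ cG2.support, v ∉ S := fun v hv => ((hsup2 v).mp hv).choose
  -- w is not on the cycles
  have hw1 : (↑w : V) ∉ cG1.support := by
    intro hmem
    obtain ⟨hw', hmem'⟩ := (hsup1 _).mp hmem
    have : (⟨(↑w : V), hw'⟩ : {v : V // v ∉ S}) = w := Subtype.ext rfl
    rw [this] at hmem'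
    have : some w ∈ M'.verts := M'.edge_vert (M'.adj_symm hu)
    rw [hM'v] at this
    exact this.1 hmem'
  have hw2 : (↑w : V) ∉ cG2.support := by
    intro hmem
    obtain ⟨hw', hmem'⟩ := (hsup2 _).mp hmem
    have : (⟨(↑w : V), hw'⟩ : {v : V // v ∉ S}) = w := Subtype.ext rfl
    rw [this] at hmem'
    have : some w ∈ M'.verts := M'.edge_vert (M'.adj_symm hu)
    rw [hM'v] at this
    exact this.2 hmem'
  -- combined matching
  have hdisjM : Disjoint MS.support (liftSub M'').support := by
    rw [hMS.support_eq_verts, hL.support_eq_verts, hMSv, liftSub_verts]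
    rw [Set.disjoint_left]
    rintro v (hvS | hvw) ⟨hv', hv''⟩
    · exact hv' hvS
    · rw [Set.mem_singleton_iff] at hvw
      subst hvw
      have : (⟨(↑w : V), hv'⟩ : {v : V // v ∉ S}) = w := Subtype.ext rfl
      rw [this] at hv''
      rw [hM''def, Subgraph.deleteVerts_verts] at hv''
      exact hv''.2 (by simp)
  have hMm : (MS ⊔ liftSub M'').IsMatching := hMS.sup hL hdisjM
  refine ⟨↑a1, ↑a2, cG1, cG2, ⟨hcG1, hcG2, ?_, MS ⊔ liftSub M'', hMm, ?_⟩,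
    hlen1 ▸ hodd1, hlen2 ▸ hodd2⟩
  · -- disjointness of the lifted cycles
    intro x hx1 hx2
    obtain ⟨hx', hm1⟩ := (hsup1 x).mp hx1
    obtain ⟨hx'', hm2⟩ := (hsup2 x).mp hx2
    have : (⟨x, hx''⟩ : {v : V // v ∉ S}) = ⟨x, hx'⟩ := Subtype.ext rfl
    rw [this] at hm2
    exact hdisj _ hm1 hm2
  · -- verts of the combined matching
    rw [Subgraph.verts_sup, hMSv, liftSub_verts]
    ext v
    simp only [Set.mem_union, Set.mem_setOf_eq, Set.mem_singleton_iff]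
    constructor
    · rintro ((hvS | rfl) | ⟨hv', hv''⟩)
      · exact ⟨fun hc => hsupS1 v hc hvS, fun hc => hsupS2 v hc hvS⟩
      · exact ⟨hw1, hw2⟩
      · rw [hM''def, Subgraph.deleteVerts_verts, hM'v] at hv''
        refine ⟨fun hc => ?_, fun hc => ?_⟩
        · obtain ⟨h', hm⟩ := (hsup1 v).mp hc
          have : (⟨v, h'⟩ : {v : V // v ∉ S}) = ⟨v, hv'⟩ := Subtype.ext rfl
          rw [this] at hm
          exact hv''.1.1 hm
        · obtain ⟨h', hm⟩ := (hsup2 v).mp hc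
          have : (⟨v, h'⟩ : {v : V // v ∉ S}) = ⟨v, hv'⟩ := Subtype.ext rfl
          rw [this] at hm
          exact hv''.1.2 hm
    · rintro ⟨hn1, hn2⟩
      by_cases hvS : v ∈ S
      · exact Or.inl (Or.inl hvS)
      · by_cases hvw : v = ↑w
        · exact Or.inl (Or.inr hvw)
        · refine Or.inr ⟨hvS, ?_⟩
          rw [hM''def, Subgraph.deleteVerts_verts, hM'v]
          refine ⟨⟨fun hc => hn1 ((hsup1 v).mpr ⟨hvS, hc⟩), fun hc => hn2 ((hsup2 v).mpr ⟨hvS, hc⟩)⟩, ?_⟩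
          simp only [Set.mem_insert_iff, Set.mem_singleton_iff]
          push_neg
          refine ⟨by simp, fun hc => hvw ?_⟩
          have := Option.some_injective _ hc
          exact congrArg Subtype.val this


/-! ### Rotation and decomposition helpers -/

lemma closed_mem_support_iff_tail {W : Type*} {Gr : SimpleGraph W} {u : W}
    (p : Gr.Walk u u) (hp : p.length ≠ 0) (x : W) :
    x ∈ p.support ↔ x ∈ p.support.tail := by
  cases p with
  | nil => simp at hp
  | cons h q =>
    simp only [Walk.support_cons, List.mem_cons, List.tail_cons]
    constructor
    · rintro (rfl | hx)
      · exact q.end_mem_support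
      · exact hx
    · exact Or.inr

lemma length_rotate' {W : Type*} {Gr : SimpleGraph W} [DecidableEq W] {u v : W}
    (c : Gr.Walk v v) (h : u ∈ c.support) : (c.rotate u h).length = c.length := by
  rw [← Walk.length_darts, ← Walk.length_darts]
  exact (Walk.rotate_darts c u h).perm.length_eq

lemma mem_support_rotate {W : Type*} {Gr : SimpleGraph W} [DecidableEq W] {u v : W}
    (c : Gr.Walk v v) (hne : c.length ≠ 0) (h : u ∈ c.support) (x : W) :
    x ∈ (c.rotate u h).support ↔ x ∈ c.support := by
  have hlen : (c.rotate u h).length ≠ 0 := by rw [length_rotate']; exact hne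
  rw [closed_mem_support_iff_tail _ hlen, closed_mem_support_iff_tail _ hne]
  exact (Walk.support_rotate c u h).mem_iff

lemma cycle_through_none_decomp (c : (contractSet G S).Walk none none) (hc : c.IsCycle) :
    ∃ (w1 wk : {v : V // v ∉ S}) (_ : (contractSet G S).Adj none (some w1))
      (inner : (contractSet G S).Walk (some w1) (some wk))
      (_ : (contractSet G S).Adj (some wk) none),
      inner.IsPath ∧ (none ∉ inner.support) ∧ w1 ≠ wk ∧ c.length = inner.length + 2 ∧
      (∀ x, x ∈ c.support ↔ x = none ∨ x ∈ inner.support) := by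
  cases c with
  | nil => exact absurd hc.three_le_length (by simp)
  | cons h tail =>
    cases tail with
    | nil => exact absurd rfl h.ne
    | cons h' rest =>
      obtain ⟨y, inner, h₂, heq⟩ := Walk.exists_cons_eq_concat h' rest
      rw [heq] at hc ⊢
      -- support of the cycle
      have hsup : (Walk.cons h (inner.concat h₂)).support
          = none :: (inner.support ++ [none]) := by
        rw [Walk.support_cons, Walk.support_concat]
      have htail : (inner.support ++ [none]).Nodup := by
        have := hc.support_nodup
        rwa [hsup, List.tail_cons] at this
      obtain ⟨hinnod, -, hdisj⟩ := List.nodup_append'.mp htail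
      have hnone : none ∉ inner.support := fun hmem => hdisj hmem (by simp)
      -- endpoints are not `none`
      obtain ⟨w1, hw1⟩ := Option.ne_none_iff_exists'.mp
        (fun he => hnone (he ▸ inner.start_mem_support))
      obtain ⟨wk, hwk⟩ := Option.ne_none_iff_exists'.mp
        (fun he => hnone (he ▸ inner.end_mem_support))
      subst hw1
      subst hwk
      -- w1 ≠ wk from trail
      have hedges : (Walk.cons h (inner.concat h₂)).edges
          = s(none, some w1) :: (inner.edges ++ [s(some wk, none)]) := by
        rw [Walk.edges_cons, Walk.edges_concat, List.concat_eq_append]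
      have htrail := hc.isTrail
      rw [Walk.isTrail_def, hedges] at htrail
      have hh := List.nodup_cons.mp htrail
      have hne12 : w1 ≠ wk := by
        rintro rfl
        apply hh.1
        refine List.mem_append.mpr (Or.inr ?_)
        simp only [List.mem_singleton]
        rw [Sym2.eq_iff]
        right
        exact ⟨rfl, rfl⟩
      refine ⟨w1, wk, h, inner, h₂, Walk.IsPath.mk' hinnod, hnone, hne12, ?_, ?_⟩
      · simp only [Walk.length_cons, Walk.length_concat]
      · intro x
        rw [hsup]
        simp only [List.mem_cons, List.mem_append, List.mem_singleton]
        tauto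


lemma lift_pathG {x y : Option {v : V // v ∉ S}} (p : (contractSet G S).Walk x y)
    (hp : none ∉ p.support) (hpath : p.IsPath) :
    ∃ (a b : {v : V // v ∉ S}) (_ : x = some a) (_ : y = some b)
      (P : G.Walk (↑a) (↑b)), P.IsPath ∧ P.length = p.length ∧
      (∀ v : V, v ∈ P.support ↔ ∃ h : v ∉ S, some ⟨v, h⟩ ∈ p.support) := by
  obtain ⟨a, b, q, hx, hy, hq⟩ := lift_walk p hp
  subst hx; subst hy
  change _ = Walk.map ι q at hq
  subst hq
  have hqp : q.IsPath := (Walk.map_isPath_iff_of_injective ι_injective).mp hpath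
  refine ⟨a, b, rfl, rfl, q.map κ, Walk.map_isPath_of_injective κ_injective hqp, ?_, ?_⟩
  · exact (Walk.length_map ..).trans (Walk.length_map ..).symm
  · intro v
    have hs1 : ∀ v, v ∈ (q.map κ).support ↔ ∃ u ∈ q.support, κ u = v := fun v => by
      rw [Walk.support_map, List.mem_map]
    have hs2 : ∀ x, x ∈ (q.map ι).support ↔ ∃ u ∈ q.support, ι u = x := fun x => by
      rw [Walk.support_map, List.mem_map]
    refine (hs1 v).trans (Iff.trans ?_ (exists_congr fun h => (hs2 _).symm))
    constructor
    · rintro ⟨u, hu, rfl⟩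
      exact ⟨u.2, u, hu, congrArg some (Subtype.ext rfl)⟩
    · rintro ⟨h, u, hu, heq⟩
      have : u = ⟨v, h⟩ := Option.some_injective _ (by simpa using heq)
      exact ⟨u, hu, by rw [this]; rfl⟩

/-- Case B: the first cycle passes through the contracted vertex. -/
lemma caseB [Fintype V] (hmc : MatchingCovered G) (ht : IsTightCut G S)
    {a b : Option {v : V // v ∉ S}}
    {c₁ : (contractSet G S).Walk a a} {c₂ : (contractSet G S).Walk b b}
    (hc1 : c₁.IsCycle) (hc2 : c₂.IsCycle)
    (hdisj : ∀ x ∈ c₁.support, x ∉ c₂.support)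
    {M' : (contractSet G S).Subgraph} (hM' : M'.IsMatching)
    (hM'v : M'.verts = {v | v ∉ c₁.support ∧ v ∉ c₂.support})
    (hodd1 : Odd c₁.length) (hodd2 : Odd c₂.length)
    (h1 : none ∈ c₁.support) (h2 : none ∉ c₂.support) :
    HasOddConformalBicycle G := by
  classical
  -- rotate c₁ to start at `none`
  have hlc1 : c₁.length ≠ 0 := by have := hc1.three_le_length; omega
  set c := c₁.rotate _ h1 with hcdef
  have hcc : c.IsCycle := hc1.rotate h1
  have hclen : c.length = c₁.length := length_rotate' c₁ h1
  have hcsup : ∀ x, x ∈ c.support ↔ x ∈ c₁.support :=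
    mem_support_rotate c₁ hlc1 h1
  obtain ⟨w1, wk, h₁, inner, h₂, hinpath, hinnone, hne1k, hclen2, hcsup2⟩ :=
    cycle_through_none_decomp c hcc
  -- lift the inner path
  obtain ⟨w1', wk', hw1', hwk', P, hPpath, hPlen, hPsup⟩ := lift_pathG inner hinnone hinpath
  obtain rfl : w1 = w1' := Option.some_injective _ hw1'
  obtain rfl : wk = wk' := Option.some_injective _ hwk'
  -- neighbours of `none` in S
  obtain ⟨z1, hz1S, hz1w1⟩ := contract_adj_none.mp h₁
  obtain ⟨z2, hz2S, hz2wk⟩ := contract_adj_none.mp h₂.symm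
  -- lift c₂
  obtain ⟨a2, rfl, cG2, hcG2, hlen2, hsup2⟩ := lift_cycleG c₂ h2 hc2
  have hsupS2 : ∀ v ∈ cG2.support, v ∉ S := fun v hv => ((hsup2 v).mp hv).choose
  have hPS : ∀ v ∈ P.support, v ∉ S := fun v hv => ((hPsup v).mp hv).choose
  -- the lifted matching
  have hM'none : none ∉ M'.verts := by rw [hM'v]; rintro ⟨hn, -⟩; exact hn h1
  have hLm : (liftSub M').IsMatching := liftSub_isMatching hM' hM'none
  -- membership in M'.verts for vertices outside S
  have hMverts : ∀ (v : V) (hv : v ∉ S),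
      (some ⟨v, hv⟩ ∈ M'.verts ↔ v ∉ P.support ∧ v ∉ cG2.support) := by
    intro v hv
    rw [hM'v]
    constructor
    · rintro ⟨hn1, hn2⟩
      refine ⟨fun hc' => ?_, fun hc' => ?_⟩
      · obtain ⟨h', hm⟩ := (hPsup v).mp hc'
        rw [show (⟨v, h'⟩ : {v : V // v ∉ S}) = ⟨v, hv⟩ from Subtype.ext rfl] at hm
        exact hn1 ((hcsup _).mp ((hcsup2 _).mpr (Or.inr hm)))
      · obtain ⟨h', hm⟩ := (hsup2 v).mp hc'
        rw [show (⟨v, h'⟩ : {v : V // v ∉ S}) = ⟨v, hv⟩ from Subtype.ext rfl] at hm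
        exact hn2 hm
    · rintro ⟨hn1, hn2⟩
      constructor
      · intro hc'
        rcases (hcsup2 _).mp ((hcsup _).mpr hc') with heq | hmem
        · exact (Option.some_ne_none _) heq
        · exact hn1 ((hPsup v).mpr ⟨hv, hmem⟩)
      · exact fun hc' => hn2 ((hsup2 v).mpr ⟨hv, hc'⟩)
  -- disjointness of P from c₂ lift
  have hPdisj : ∀ x ∈ P.support, x ∉ cG2.support := by
    intro x hx hx2
    obtain ⟨h', hm⟩ := (hPsup x).mp hx
    obtain ⟨h'', hm2⟩ := (hsup2 x).mp hx2
    rw [show (⟨x, h''⟩ : {v : V // v ∉ S}) = ⟨x, h'⟩ from Subtype.ext rfl] at hm2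
    exact hdisj _ ((hcsup _).mp ((hcsup2 _).mpr (Or.inr hm))) hm2
  by_cases hzz : z1 = z2
  · -- single vertex in S
    subst hzz
    set CG : G.Walk z1 z1 := Walk.cons hz1w1 (P.concat hz2wk.symm) with hCGdef
    have hCGsup : ∀ x, x ∈ CG.support ↔ x = z1 ∨ x ∈ P.support := by
      intro x
      rw [hCGdef, Walk.support_cons, Walk.support_concat]
      simp only [List.mem_cons, List.mem_append, List.mem_singleton]
      tauto
    have hCGcycle : CG.IsCycle := by
      rw [hCGdef, Walk.cons_isCycle_iff]
      refine ⟨?_, ?_⟩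
      · rw [Walk.isPath_def, Walk.support_concat, List.nodup_append']
        refine ⟨hPpath.support_nodup, List.nodup_singleton _, ?_⟩
        intro x hx hx'
        rw [List.mem_singleton] at hx'
        subst hx'
        exact hPS x hx hz1S
      · rw [Walk.edges_concat, List.concat_eq_append]
        intro hmem
        rcases List.mem_append.mp hmem with hmem | hmem
        · exact hPS z1 (P.fst_mem_support_of_mem_edges hmem) hz1S
        · rw [List.mem_singleton, Sym2.eq_iff] at hmem
          rcases hmem with ⟨h1', -⟩ | ⟨-, h2'⟩
          · exact wk.2 (h1' ▸ hz1S)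
          · exact hne1k (Subtype.ext h2')
    have hCGlen : CG.length = c₁.length := by
      rw [hCGdef, Walk.length_cons, Walk.length_concat, hPlen, ← hclen, hclen2]
    -- the matching
    obtain ⟨A, hA, hAv⟩ := near_matching hmc ht hz1S w1.2 hz1w1
    have hdisjM : Disjoint A.support (liftSub M').support := by
      rw [hA.support_eq_verts, hLm.support_eq_verts, hAv, liftSub_verts]
      rw [Set.disjoint_left]
      rintro v ⟨hvS, -⟩ ⟨hv', -⟩
      exact hv' hvS
    refine ⟨z1, ↑a2, CG, cG2, ⟨hCGcycle, hcG2, ?_, A ⊔ liftSub M', hA.sup hLm hdisjM, ?_⟩,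
      hCGlen ▸ hodd1, hlen2 ▸ hodd2⟩
    · intro x hx
      rcases (hCGsup x).mp hx with rfl | hx'
      · exact fun hc' => hsupS2 _ hc' hz1S
      · exact hPdisj x hx'
    · rw [Subgraph.verts_sup, hAv, liftSub_verts]
      ext v
      simp only [Set.mem_union, Set.mem_diff, Set.mem_singleton_iff, Set.mem_setOf_eq]
      constructor
      · rintro (⟨hvS, hvz⟩ | ⟨hv', hv''⟩)
        · refine ⟨fun hc' => ?_, fun hc' => hsupS2 _ hc' hvS⟩
          rcases (hCGsup v).mp hc' with rfl | hc''
          · exact hvz rfl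
          · exact hPS _ hc'' hvS
        · have := (hMverts v hv').mp hv''
          refine ⟨fun hc' => ?_, this.2⟩
          rcases (hCGsup v).mp hc' with rfl | hc''
          · exact hv' hz1S
          · exact this.1 hc''
      · rintro ⟨hn1, hn2⟩
        by_cases hvS : v ∈ S
        · refine Or.inl ⟨hvS, ?_⟩
          rintro rfl
          exact hn1 ((hCGsup v).mpr (Or.inl rfl))
        · refine Or.inr ⟨hvS, (hMverts v hvS).mpr ⟨?_, hn2⟩⟩
          exact fun hc' => hn1 ((hCGsup v).mpr (Or.inr hc'))
  · -- distinct vertices in S: use the alternating path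
    obtain ⟨A, hA, hAv⟩ := near_matching hmc ht hz1S w1.2 hz1w1
    obtain ⟨B, hB, hBv⟩ := near_matching hmc ht hz2S wk.2 hz2wk
    obtain ⟨Q, hQpath, hQeven, hQS, Cm, hCm, hCmv⟩ :=
      alt_path S.ncard S le_rfl z1 z2 hz1S hz2S hzz A B hA hB hAv hBv
    set R := Q.reverse with hRdef
    have hRnodup : R.support.Nodup := by
      rw [hRdef, Walk.support_reverse]
      exact List.nodup_reverse.mpr hQpath.support_nodup
    have hRmem : ∀ x, x ∈ R.support ↔ x ∈ Q.support := by
      intro x; rw [hRdef, Walk.support_reverse, List.mem_reverse]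
    have hR0 : R.support = z2 :: R.support.tail := Walk.support_eq_cons R
    have hz2tail : z2 ∉ R.support.tail := by
      have := hRnodup
      rw [hR0, List.nodup_cons] at this
      exact this.1
    have htailnodup : R.support.tail.Nodup := by
      have := hRnodup
      rw [hR0, List.nodup_cons] at this
      exact this.2
    have htailmem : ∀ x ∈ R.support.tail, x ∈ Q.support := by
      intro x hx
      exact (hRmem x).mp (by rw [hR0]; exact List.mem_cons_of_mem _ hx)
    set p₁ : G.Walk (↑w1) z1 := (P.concat hz2wk.symm).append R with hp₁def
    set CG : G.Walk z1 z1 := Walk.cons hz1w1 p₁ with hCGdef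
    have hp₁sup : p₁.support = (P.support ++ [z2]) ++ R.support.tail := by
      rw [hp₁def, Walk.support_append, Walk.support_concat]
    have hCGsup : ∀ x, x ∈ CG.support ↔ x ∈ P.support ∨ x ∈ Q.support := by
      intro x
      rw [hCGdef, Walk.support_cons]
      simp only [List.mem_cons, hp₁sup, List.mem_append, List.mem_singleton, List.not_mem_nil, or_false]
      constructor
      · rintro (rfl | (hx | rfl) | hx)
        · exact Or.inr Q.start_mem_support
        · exact Or.inl hx
        · exact Or.inr Q.end_mem_support
        · exact Or.inr (htailmem _ hx)
      · rintro (hx | hx)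
        · exact Or.inr (Or.inl (Or.inl hx))
        · rcases List.mem_cons.mp (hR0 ▸ (hRmem x).mpr hx) with rfl | hx'
          · exact Or.inr (Or.inl (Or.inr rfl))
          · exact Or.inr (Or.inr hx')
    have hCGcycle : CG.IsCycle := by
      rw [hCGdef, Walk.cons_isCycle_iff]
      constructor
      · rw [Walk.isPath_def, hp₁sup, List.nodup_append']
        refine ⟨List.nodup_append'.mpr ⟨hPpath.support_nodup, List.nodup_singleton _, ?_⟩,
          htailnodup, ?_⟩
        · intro x hx hx'
          rw [List.mem_singleton] at hx'
          subst hx'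
          exact hPS x hx hz2S
        · intro x hx hx'
          have hxQ : x ∈ Q.support := htailmem _ hx'
          rcases List.mem_append.mp hx with hx | hx
          · exact hPS x hx (hQS x hxQ)
          · rw [List.mem_singleton] at hx
            subst hx
            exact hz2tail hx'
      · rw [hp₁def, Walk.edges_append, Walk.edges_concat, List.concat_eq_append]
        intro hmem
        rcases List.mem_append.mp hmem with hmem | hmem
        · rcases List.mem_append.mp hmem with hmem | hmem
          · exact hPS z1 (P.fst_mem_support_of_mem_edges hmem) hz1S
          · rw [List.mem_singleton, Sym2.eq_iff] at hmem
            rcases hmem with ⟨h1', -⟩ | ⟨h1', -⟩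
            · exact wk.2 (h1' ▸ hz1S)
            · exact hzz h1'
        · rw [hRdef, Walk.edges_reverse, List.mem_reverse] at hmem
          exact w1.2 (hQS _ (Q.snd_mem_support_of_mem_edges hmem))
    have hCGlen : CG.length = c₁.length + Q.length := by
      rw [hCGdef, Walk.length_cons, hp₁def, Walk.length_append, Walk.length_concat,
        hPlen, hRdef, Walk.length_reverse, ← hclen, hclen2]
      omega
    have hCGodd : Odd CG.length := by
      rw [hCGlen]
      rcases hodd1 with ⟨k, hk⟩
      rcases hQeven with ⟨m, hm⟩
      exact ⟨k + m, by omega⟩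
    -- the matching
    have hdisjM : Disjoint Cm.support (liftSub M').support := by
      rw [hCm.support_eq_verts, hLm.support_eq_verts, hCmv, liftSub_verts]
      rw [Set.disjoint_left]
      rintro v ⟨hvS, -⟩ ⟨hv', -⟩
      exact hv' hvS
    refine ⟨z1, ↑a2, CG, cG2, ⟨hCGcycle, hcG2, ?_, Cm ⊔ liftSub M', hCm.sup hLm hdisjM, ?_⟩,
      hCGodd, hlen2 ▸ hodd2⟩
    · intro x hx
      rcases (hCGsup x).mp hx with hx' | hx'
      · exact hPdisj x hx'
      · exact fun hc' => hsupS2 _ hc' (hQS _ hx')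
    · rw [Subgraph.verts_sup, hCmv, liftSub_verts]
      ext v
      simp only [Set.mem_union, Set.mem_diff, Set.mem_setOf_eq]
      constructor
      · rintro (⟨hvS, hvQ⟩ | ⟨hv', hv''⟩)
        · refine ⟨fun hc' => ?_, fun hc' => hsupS2 _ hc' hvS⟩
          rcases (hCGsup v).mp hc' with hc'' | hc''
          · exact hPS _ hc'' hvS
          · exact hvQ hc''
        · have := (hMverts v hv').mp hv''
          refine ⟨fun hc' => ?_, this.2⟩
          rcases (hCGsup v).mp hc' with hc'' | hc''
          · exact this.1 hc''
          · exact hv' (hQS _ hc'')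
      · rintro ⟨hn1, hn2⟩
        by_cases hvS : v ∈ S
        · refine Or.inl ⟨hvS, fun hc' => ?_⟩
          exact hn1 ((hCGsup v).mpr (Or.inr hc'))
        · refine Or.inr ⟨hvS, (hMverts v hvS).mpr ⟨?_, hn2⟩⟩
          exact fun hc' => hn1 ((hCGsup v).mpr (Or.inl hc'))

end ContractAux

/-- Contracting a shore of a nontrivial tight cut preserves the absence of
odd conformal bicycles. -/
theorem contract_tight_cut_no_odd_conformal_bicycle [Fintype V]
    (G : SimpleGraph V) (S : Set V)
    (hmc : MatchingCovered G) (hnt : IsNontrivialCut S) (ht : IsTightCut G S)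
    (h : ¬ HasOddConformalBicycle G) :
    ¬ HasOddConformalBicycle (contractSet G S) := by
  classical
  intro hcon
  obtain ⟨a, b, c₁, c₂, ⟨hc1, hc2, hdisj, M', hM', hM'v⟩, ho1, ho2⟩ := hcon
  have hdisj' : ∀ x ∈ c₂.support, x ∉ c₁.support := fun x hx hx' => hdisj x hx' hx
  have hM'v' : M'.verts = {v | v ∉ c₂.support ∧ v ∉ c₁.support} := by
    rw [hM'v]; ext v; simp only [Set.mem_setOf_eq]; tauto
  by_cases h1 : none ∈ c₁.support
  · have h2 : none ∉ c₂.support := hdisj none h1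
    exact h (ContractAux.caseB hmc ht hc1 hc2 hdisj hM' hM'v ho1 ho2 h1 h2)
  · by_cases h2 : none ∈ c₂.support
    · exact h (ContractAux.caseB hmc ht hc2 hc1 hdisj' hM' hM'v' ho2 ho1 h2 h1)
    · exact h (ContractAux.caseA hmc ht hc1 hc2 hdisj hM' hM'v ho1 ho2 h1 h2)
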